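/- arXiv:2410.08095 — 7 statements merged into one kernel-verified Lean document; each statement's English description precedes it below -/
import Mathlib

section
/- Let Ψ, φ, φ' ∈ ℝ^d be descending probability vectors, and define the maximal transformation probability into a target x by q_I(x) = min over { l ∈ {1,…,d} : C_l(x) > 0 } of C_l(Ψ)/C_l(x). If φ ≺ φ', then q_I(φ) ≤ q_I(φ'); that is, for a fixed initial vector Ψ, the maximal coherence transformation probability is a Schur-convex function of the target's coherence vector. -/
open Finset

/-- Tail-sum coherence monotone `C_l(p) = ∑_{i=l}^d p_i`, for a vector with (1-based)
entries `p 1, …, p d`.  Note `Cm d p (d+1) = 0` automatically. -/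
noncomputable def Cm (d : ℕ) (p : ℕ → ℝ) (l : ℕ) : ℝ := ∑ i ∈ Finset.Icc l d, p i

/-- `p` is a descending probability vector on the (1-based) index range `{1, …, d}`. -/
structure DescProb (d : ℕ) (p : ℕ → ℝ) : Prop where
  nonneg : ∀ i, 1 ≤ i → i ≤ d → 0 ≤ p i
  anti : ∀ i j, 1 ≤ i → i ≤ j → j ≤ d → p j ≤ p i
  sum_one : ∑ i ∈ Finset.Icc 1 d, p i = 1

/-- `p ≺ q` : `p` is majorized by `q` (both regarded as descending vectors on `{1, …, d}`). -/
def MajorizedBy (d : ℕ) (p q : ℕ → ℝ) : Prop :=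
  (∀ k, 1 ≤ k → k ≤ d → ∑ i ∈ Finset.Icc 1 k, p i ≤ ∑ i ∈ Finset.Icc 1 k, q i) ∧
    ∑ i ∈ Finset.Icc 1 d, p i = ∑ i ∈ Finset.Icc 1 d, q i

lemma Cm_nonneg (d : ℕ) (p : ℕ → ℝ) (hp : DescProb d p) (l : ℕ) (hl : 1 ≤ l) :
    0 ≤ Cm d p l := by
  unfold Cm
  apply Finset.sum_nonneg
  intro i hi
  simp only [Finset.mem_Icc] at hi
  exact hp.nonneg i (le_trans hl hi.1) hi.2

lemma Cm_ge_of_maj (d : ℕ) (φ φ' : ℕ → ℝ) (hmaj : MajorizedBy d φ φ')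
    (l : ℕ) (hl : 1 ≤ l) (hld : l ≤ d) : Cm d φ' l ≤ Cm d φ l := by
  obtain ⟨hpre, htot⟩ := hmaj
  have hsplit : ∀ p : ℕ → ℝ, ∑ i ∈ Finset.Icc 1 d, p i =
      (∑ i ∈ Finset.Icc 1 (l-1), p i) + Cm d p l := by
    intro p
    unfold Cm
    rw [← Finset.sum_union]
    · congr 1
      ext i
      simp only [Finset.mem_union, Finset.mem_Icc]
      omega
    · rw [Finset.disjoint_left]
      intro i hi hi2
      simp only [Finset.mem_Icc] at hi hi2
      omega
  have h1 := hsplit φ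
  have h2 := hsplit φ'
  have hpref : ∑ i ∈ Finset.Icc 1 (l-1), φ i ≤ ∑ i ∈ Finset.Icc 1 (l-1), φ' i := by
    rcases eq_or_lt_of_le hl with h | h
    · have : l - 1 = 0 := by omega
      rw [this]
      simp
    · exact hpre (l-1) (by omega) (by omega)
  linarith

/-- For a fixed initial descending probability vector `Ψ`, the maximal
coherence transformation probability `q_I(x) = min {C_l(Ψ)/C_l(x) : 1 ≤ l ≤ d, C_l(x) > 0}`
is Schur-convex in the target vector: if `φ ≺ φ'` then `q_I(φ) ≤ q_I(φ')`. -/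
theorem schur_convex_initial (d : ℕ) (hd : 1 ≤ d) (Ψ φ φ' : ℕ → ℝ)
    (hΨ : DescProb d Ψ) (hφ : DescProb d φ) (hφ' : DescProb d φ')
    (hmaj : MajorizedBy d φ φ') :
    sInf {r : ℝ | ∃ l, 1 ≤ l ∧ l ≤ d ∧ 0 < Cm d φ l ∧ r = Cm d Ψ l / Cm d φ l} ≤
      sInf {r : ℝ | ∃ l, 1 ≤ l ∧ l ≤ d ∧ 0 < Cm d φ' l ∧ r = Cm d Ψ l / Cm d φ' l} := by
  set S := {r : ℝ | ∃ l, 1 ≤ l ∧ l ≤ d ∧ 0 < Cm d φ l ∧ r = Cm d Ψ l / Cm d φ l}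
  have hSbdd : BddBelow S := by
    refine ⟨0, ?_⟩
    rintro r ⟨l, hl, hld, hpos, rfl⟩
    exact div_nonneg (Cm_nonneg d Ψ hΨ l hl) hpos.le
  have hne : {r : ℝ | ∃ l, 1 ≤ l ∧ l ≤ d ∧ 0 < Cm d φ' l ∧ r = Cm d Ψ l / Cm d φ' l}.Nonempty := by
    refine ⟨Cm d Ψ 1 / Cm d φ' 1, 1, le_refl 1, hd, ?_, rfl⟩
    unfold Cm
    rw [hφ'.sum_one]
    norm_num
  apply le_csInf hne
  rintro r ⟨l, hl, hld, hpos', rfl⟩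
  have hge := Cm_ge_of_maj d φ φ' hmaj l hl hld
  have hpos : 0 < Cm d φ l := lt_of_lt_of_le hpos' hge
  have hmem : Cm d Ψ l / Cm d φ l ∈ S := ⟨l, hl, hld, hpos, rfl⟩
  calc sInf S ≤ Cm d Ψ l / Cm d φ l := csInf_le hSbdd hmem
    _ ≤ Cm d Ψ l / Cm d φ' l :=
      div_le_div_of_nonneg_left (Cm_nonneg d Ψ hΨ l hl) hpos' hge
end

section
/- Let a, r ∈ ℝ^d satisfy a_1 ≥ a_2 ≥ ⋯ ≥ a_d ≥ 0, r_1 ≥ r_2 ≥ ⋯ ≥ r_d ≥ 0, ∑_{i=1}^d a_i = 1 and ∑_{i=1}^d r_i a_i = 1. Then ∑_{i=1}^k a_i ≤ ∑_{i=1}^k r_i a_i for every k ∈ {1,…,d}; that is, a is majorized by the Hadamard product r ⊙ a (whose entries (r⊙a)_i = r_i a_i are nonnegative and nonincreasing). -/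
open Finset

/-- If `a` is a descending probability vector, `r` is nonnegative and
nonincreasing, and `∑ r_i a_i = 1`, then `a` is majorized by the Hadamard product
`r ⊙ a`, whose entries are nonnegative and nonincreasing (and sum to `1`). -/
theorem majorized_by_hadamard (d : ℕ) (a r : ℕ → ℝ)
    (ha : DescProb d a)
    (hr_nonneg : ∀ i, 1 ≤ i → i ≤ d → 0 ≤ r i)
    (hr_anti : ∀ i j, 1 ≤ i → i ≤ j → j ≤ d → r j ≤ r i)
    (hra : ∑ i ∈ Finset.Icc 1 d, r i * a i = 1) :
    (∀ k, 1 ≤ k → k ≤ d →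
        ∑ i ∈ Finset.Icc 1 k, a i ≤ ∑ i ∈ Finset.Icc 1 k, r i * a i) ∧
      MajorizedBy d a (fun i => r i * a i) ∧ DescProb d (fun i => r i * a i) := by
  have key : ∀ k, 1 ≤ k → k ≤ d →
      ∑ i ∈ Finset.Icc 1 k, a i ≤ ∑ i ∈ Finset.Icc 1 k, r i * a i := by
    intro k hk1 hkd
    by_cases hrk : 1 ≤ r k
    · apply Finset.sum_le_sum
      intro i hi
      rw [Finset.mem_Icc] at hi
      have h1 : r k ≤ r i := hr_anti i k hi.1 hi.2 hkd
      have ha0 : 0 ≤ a i := ha.nonneg i hi.1 (hi.2.trans hkd)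
      nlinarith
    · push_neg at hrk
      have hsplit : ∀ f : ℕ → ℝ, ∑ i ∈ Finset.Icc 1 k, f i + ∑ i ∈ Finset.Icc (k+1) d, f i
          = ∑ i ∈ Finset.Icc 1 d, f i := by
        intro f
        rw [Finset.Icc_add_one_left_eq_Ioc k d, ← zero_add 1, Finset.Icc_add_one_left_eq_Ioc 0 k, Finset.Icc_add_one_left_eq_Ioc 0 d]
        exact Finset.sum_Ioc_consecutive f (Nat.zero_le k) hkd
      have htail : ∑ i ∈ Finset.Icc (k+1) d, r i * a i ≤ ∑ i ∈ Finset.Icc (k+1) d, a i := by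
        apply Finset.sum_le_sum
        intro i hi
        rw [Finset.mem_Icc] at hi
        have hi1 : 1 ≤ i := le_trans (Nat.le_add_left 1 k) hi.1
        have h1 : r i ≤ r k := hr_anti k i hk1 (Nat.le_of_succ_le hi.1) hi.2
        have ha0 : 0 ≤ a i := ha.nonneg i hi1 hi.2
        nlinarith
      have h1 := hsplit a
      have h2 := hsplit (fun i => r i * a i)
      rw [ha.sum_one] at h1
      rw [hra] at h2
      linarith
  have hsum : ∑ i ∈ Finset.Icc 1 d, a i = ∑ i ∈ Finset.Icc 1 d, r i * a i := by
    rw [ha.sum_one, hra]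
  refine ⟨key, ⟨key, hsum⟩, ⟨?_, ?_, hra⟩⟩
  · intro i h1 h2
    exact mul_nonneg (hr_nonneg i h1 h2) (ha.nonneg i h1 h2)
  · intro i j h1 h2 h3
    have := hr_anti i j h1 h2 h3
    have := ha.anti i j h1 h2 h3
    have := ha.nonneg j (h1.trans h2) h3
    have := hr_nonneg i h1 (h2.trans h3)
    nlinarith
end

section
/- The intermediate vector φ^f produced by the recursive construction is a descending probability vector: φ^f_1 ≥ φ^f_2 ≥ ⋯ ≥ φ^f_d ≥ 0 and ∑_{i=1}^d φ^f_i = 1. -/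
open Finset

/-- The ratio `(C_l(ψ) - C_prev(ψ)) / (C_l(φ) - C_prev(φ))` appearing in the recursive
construction of the intermediate vector. -/
noncomputable def ratio (d : ℕ) (ψ φ : ℕ → ℝ) (prev l : ℕ) : ℝ :=
  (Cm d ψ l - Cm d ψ prev) / (Cm d φ l - Cm d φ prev)

/-- One step of the recursion: the minimal ratio over `l ∈ {1, …, prev - 1}`. -/
noncomputable def stepQ (d : ℕ) (ψ φ : ℕ → ℝ) (prev : ℕ) : ℝ :=
  sInf {x : ℝ | ∃ l, 1 ≤ l ∧ l ≤ prev - 1 ∧ x = ratio d ψ φ prev l}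

/-- One step of the recursion: the smallest `l ∈ {1, …, prev - 1}` attaining the minimal
ratio. -/
noncomputable def stepL (d : ℕ) (ψ φ : ℕ → ℝ) (prev : ℕ) : ℕ :=
  sInf {l : ℕ | 1 ≤ l ∧ l ≤ prev - 1 ∧ ratio d ψ φ prev l = stepQ d ψ φ prev}

/-- The sequence of indices `l_0 = d + 1 > l_1 > l_2 > ⋯` of the recursive construction. -/
noncomputable def Lseq (d : ℕ) (ψ φ : ℕ → ℝ) : ℕ → ℕ
  | 0 => d + 1
  | j + 1 => stepL d ψ φ (Lseq d ψ φ j)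

/-- The sequence of ratios `q_1 < q_2 < ⋯` of the recursive construction (`Qseq d ψ φ j`
is `q_j` for `j ≥ 1`; the value at `0` is irrelevant). -/
noncomputable def Qseq (d : ℕ) (ψ φ : ℕ → ℝ) : ℕ → ℝ
  | 0 => 1
  | j + 1 => stepQ d ψ φ (Lseq d ψ φ j)

/-- The terminating step `k` of the recursion: the first index `j` with `l_j = 1`. -/
noncomputable def kstop (d : ℕ) (ψ φ : ℕ → ℝ) : ℕ := sInf {j : ℕ | Lseq d ψ φ j = 1}

/-- The intermediate vector `φ^f`, with `φ^f_i = q_j φ_i` for `i ∈ {l_j, …, l_{j-1} - 1}`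
(for `i ∈ {1, …, d}`, the smallest `j` with `l_j ≤ i` is precisely the `j` with
`l_j ≤ i ≤ l_{j-1} - 1`). -/
noncomputable def phif (d : ℕ) (ψ φ : ℕ → ℝ) (i : ℕ) : ℝ :=
  Qseq d ψ φ (sInf {j : ℕ | Lseq d ψ φ j ≤ i}) * φ i

section Aux

variable {d : ℕ} {ψ φ : ℕ → ℝ}

lemma Cm_eq_Ico (p : ℕ → ℝ) (l : ℕ) : Cm d p l = ∑ i ∈ Finset.Ico l (d+1), p i := by
  rw [Cm, Finset.Ico_add_one_right_eq_Icc]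

lemma Cm_sub (p : ℕ → ℝ) {a b : ℕ} (hab : a ≤ b) (hb : b ≤ d+1) :
    Cm d p a - Cm d p b = ∑ i ∈ Finset.Ico a b, p i := by
  rw [Cm_eq_Ico, Cm_eq_Ico, sub_eq_iff_eq_add]
  exact (Finset.sum_Ico_consecutive p hab hb).symm

lemma Cm_sub_pos (p : ℕ → ℝ) (hp : ∀ i, 1 ≤ i → i ≤ d → 0 < p i) {a b : ℕ}
    (ha : 1 ≤ a) (hab : a < b) (hb : b ≤ d+1) :
    0 < Cm d p a - Cm d p b := by
  rw [Cm_sub p hab.le hb]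
  apply Finset.sum_pos
  · intro i hi
    rw [Finset.mem_Ico] at hi
    exact hp i (le_trans ha hi.1) (by omega)
  · exact ⟨a, Finset.mem_Ico.2 ⟨le_refl a, hab⟩⟩

lemma ratio_pos (hψpos : ∀ i, 1 ≤ i → i ≤ d → 0 < ψ i) (hφpos : ∀ i, 1 ≤ i → i ≤ d → 0 < φ i)
    {prev l : ℕ} (hl : 1 ≤ l) (hlp : l < prev) (hp : prev ≤ d+1) :
    0 < ratio d ψ φ prev l :=
  div_pos (Cm_sub_pos ψ hψpos hl hlp hp) (Cm_sub_pos φ hφpos hl hlp hp)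

lemma step_facts (hψpos : ∀ i, 1 ≤ i → i ≤ d → 0 < ψ i) (hφpos : ∀ i, 1 ≤ i → i ≤ d → 0 < φ i)
    {prev : ℕ} (h2 : 2 ≤ prev) (hpd : prev ≤ d+1) :
    1 ≤ stepL d ψ φ prev ∧ stepL d ψ φ prev ≤ prev - 1 ∧
      ratio d ψ φ prev (stepL d ψ φ prev) = stepQ d ψ φ prev ∧
      (∀ l, 1 ≤ l → l ≤ prev - 1 → stepQ d ψ φ prev ≤ ratio d ψ φ prev l) ∧
      (∀ l, 1 ≤ l → l < stepL d ψ φ prev → stepQ d ψ φ prev < ratio d ψ φ prev l) ∧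
      0 < stepQ d ψ φ prev := by
  set S : Set ℝ := {x : ℝ | ∃ l, 1 ≤ l ∧ l ≤ prev - 1 ∧ x = ratio d ψ φ prev l} with hS
  have hSim : S = (fun l => ratio d ψ φ prev l) '' (Set.Icc 1 (prev - 1)) := by
    ext x
    simp only [hS, Set.mem_setOf_eq, Set.mem_image, Set.mem_Icc]
    constructor
    · rintro ⟨l, h1, h2, h3⟩; exact ⟨l, ⟨h1, h2⟩, h3.symm⟩
    · rintro ⟨l, ⟨h1, h2⟩, h3⟩; exact ⟨l, h1, h2, h3.symm⟩
  have hfin : S.Finite := by rw [hSim]; exact (Set.finite_Icc _ _).image _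
  have hne : S.Nonempty := ⟨ratio d ψ φ prev 1, 1, le_refl 1, by omega, rfl⟩
  have hmem : stepQ d ψ φ prev ∈ S := hne.csInf_mem hfin
  have hle : ∀ l, 1 ≤ l → l ≤ prev - 1 → stepQ d ψ φ prev ≤ ratio d ψ φ prev l := by
    intro l h1 h2
    exact csInf_le hfin.bddBelow ⟨l, h1, h2, rfl⟩
  obtain ⟨l0, hl01, hl0p, hl0⟩ := hmem
  have hTne : {l : ℕ | 1 ≤ l ∧ l ≤ prev - 1 ∧ ratio d ψ φ prev l = stepQ d ψ φ prev}.Nonempty :=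
    ⟨l0, hl01, hl0p, hl0.symm⟩
  have hLmem : stepL d ψ φ prev ∈ {l : ℕ | 1 ≤ l ∧ l ≤ prev - 1 ∧ ratio d ψ φ prev l = stepQ d ψ φ prev} :=
    Nat.sInf_mem hTne
  obtain ⟨hL1, hLp, hLr⟩ := hLmem
  refine ⟨hL1, hLp, hLr, hle, ?_, ?_⟩
  · intro l h1 h2
    have hlp : l ≤ prev - 1 := by omega
    have := Nat.notMem_of_lt_sInf
      (s := {l : ℕ | 1 ≤ l ∧ l ≤ prev - 1 ∧ ratio d ψ φ prev l = stepQ d ψ φ prev})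
      (show l < sInf _ from h2)
    have hne' : ratio d ψ φ prev l ≠ stepQ d ψ φ prev := by
      intro h; exact this ⟨h1, hlp, h⟩
    exact lt_of_le_of_ne (hle l h1 hlp) (Ne.symm hne')
  · rw [← hLr]
    exact ratio_pos hψpos hφpos hL1 (by omega) hpd


variable (hψpos : ∀ i, 1 ≤ i → i ≤ d → 0 < ψ i) (hφpos : ∀ i, 1 ≤ i → i ≤ d → 0 < φ i)

include hψpos hφpos

lemma Lseq_step {j : ℕ} (h2 : 2 ≤ Lseq d ψ φ j) (hd : Lseq d ψ φ j ≤ d+1) :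
    1 ≤ Lseq d ψ φ (j+1) ∧ Lseq d ψ φ (j+1) ≤ Lseq d ψ φ j - 1 := by
  obtain ⟨h1, h2', _⟩ := step_facts hψpos hφpos h2 hd
  exact ⟨h1, h2'⟩

lemma exists_Lseq_one : ∃ j, Lseq d ψ φ j = 1 := by
  have key : ∀ n j, Lseq d ψ φ j ≤ n → 1 ≤ Lseq d ψ φ j → Lseq d ψ φ j ≤ d+1 →
      ∃ j', Lseq d ψ φ j' = 1 := by
    intro n
    induction n using Nat.strong_induction_on with
    | _ n ih =>
      intro j hn h1 hd
      rcases eq_or_lt_of_le h1 with h | h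
      · exact ⟨j, h.symm⟩
      · have h2 : 2 ≤ Lseq d ψ φ j := h
        obtain ⟨ha, hb⟩ := Lseq_step hψpos hφpos h2 hd
        exact ih (Lseq d ψ φ j - 1) (by omega) (j+1) hb ha (by omega)
  exact key (d+1) 0 (le_refl _) (by simp [Lseq]) (by simp [Lseq])

lemma Lseq_kstop : Lseq d ψ φ (kstop d ψ φ) = 1 :=
  Nat.sInf_mem (exists_Lseq_one hψpos hφpos)

lemma Lseq_before (j : ℕ) (hj : j ≤ kstop d ψ φ) :
    Lseq d ψ φ j ≤ d + 1 ∧ 1 ≤ Lseq d ψ φ j ∧ (j < kstop d ψ φ → 2 ≤ Lseq d ψ φ j) := by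
  induction j with
  | zero =>
    refine ⟨by simp [Lseq], by simp [Lseq], ?_⟩
    intro hk
    have h1 : Lseq d ψ φ 0 = d + 1 := rfl
    have : Lseq d ψ φ 0 ≠ 1 := by
      intro h
      have h' : kstop d ψ φ ≤ 0 := Nat.sInf_le h
      omega
    omega
  | succ j ih =>
    have hj' : j ≤ kstop d ψ φ := by omega
    obtain ⟨ha, hb, hc⟩ := ih hj'
    have h2 : 2 ≤ Lseq d ψ φ j := hc (by omega)
    obtain ⟨hx, hy⟩ := Lseq_step hψpos hφpos h2 ha
    refine ⟨by omega, hx, ?_⟩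
    intro hk
    have : Lseq d ψ φ (j+1) ≠ 1 := by
      intro h
      have h' : kstop d ψ φ ≤ j + 1 := Nat.sInf_le h
      omega
    omega

lemma Lseq_strict_mono {a b : ℕ} (hab : a < b) (hb : b ≤ kstop d ψ φ) :
    Lseq d ψ φ b < Lseq d ψ φ a := by
  induction b with
  | zero => omega
  | succ b ih =>
    obtain ⟨hL1, hL2, hL3⟩ := Lseq_before hψpos hφpos b (by omega)
    have h2 : 2 ≤ Lseq d ψ φ b := hL3 (by omega)
    obtain ⟨hx, hy⟩ := Lseq_step hψpos hφpos h2 hL1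
    rcases Nat.lt_or_ge a b with h | h
    · have := ih h (by omega)
      omega
    · have : a = b := by omega
      subst this
      omega

lemma Lseq_anti {a b : ℕ} (hab : a ≤ b) (hb : b ≤ kstop d ψ φ) :
    Lseq d ψ φ b ≤ Lseq d ψ φ a := by
  rcases eq_or_lt_of_le hab with h | h
  · subst h; exact le_refl _
  · exact (Lseq_strict_mono hψpos hφpos h hb).le


lemma step_at (j : ℕ) (hj : j < kstop d ψ φ) :
    1 ≤ Lseq d ψ φ (j+1) ∧ Lseq d ψ φ (j+1) ≤ Lseq d ψ φ j - 1 ∧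
      ratio d ψ φ (Lseq d ψ φ j) (Lseq d ψ φ (j+1)) = Qseq d ψ φ (j+1) ∧
      (∀ l, 1 ≤ l → l ≤ Lseq d ψ φ j - 1 → Qseq d ψ φ (j+1) ≤ ratio d ψ φ (Lseq d ψ φ j) l) ∧
      (∀ l, 1 ≤ l → l < Lseq d ψ φ (j+1) → Qseq d ψ φ (j+1) < ratio d ψ φ (Lseq d ψ φ j) l) ∧
      0 < Qseq d ψ φ (j+1) := by
  obtain ⟨hL1, _, hL3⟩ := Lseq_before hψpos hφpos j hj.le
  exact step_facts hψpos hφpos (hL3 hj) hL1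

lemma Qseq_lt_succ (m : ℕ) (hm : m + 1 < kstop d ψ φ) :
    Qseq d ψ φ (m+1) < Qseq d ψ φ (m+2) := by
  obtain ⟨hA1, hA2, hA3, hA4, hA5, hA6⟩ := step_at hψpos hφpos m (by omega)
  obtain ⟨hB1, hB2, hB3, hB4, hB5, hB6⟩ := step_at hψpos hφpos (m+1) hm
  obtain ⟨hLm1, hLm2, hLm3⟩ := Lseq_before hψpos hφpos m (by omega)
  obtain ⟨hLn1, hLn2, hLn3⟩ := Lseq_before hψpos hφpos (m+1) (by omega)
  have h2m : 2 ≤ Lseq d ψ φ m := hLm3 (by omega)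
  have h2n : 2 ≤ Lseq d ψ φ (m+1) := hLn3 hm
  set l := Lseq d ψ φ (m+2) with hl
  set q := Qseq d ψ φ (m+1) with hq
  have hl1 : 1 ≤ l := hB1
  have hlLn : l < Lseq d ψ φ (m+1) := by omega
  have hLnLm : Lseq d ψ φ (m+1) < Lseq d ψ φ m := by omega
  have hb1 : 0 < Cm d φ l - Cm d φ (Lseq d ψ φ m) :=
    Cm_sub_pos φ hφpos hl1 (by omega) hLm1
  have hb2 : 0 < Cm d φ (Lseq d ψ φ (m+1)) - Cm d φ (Lseq d ψ φ m) :=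
    Cm_sub_pos φ hφpos (by omega) hLnLm hLm1
  have hb3 : 0 < Cm d φ l - Cm d φ (Lseq d ψ φ (m+1)) :=
    Cm_sub_pos φ hφpos hl1 hlLn (by omega)
  have hgt : q < ratio d ψ φ (Lseq d ψ φ m) l := hA5 l hl1 hlLn
  have heq : ratio d ψ φ (Lseq d ψ φ m) (Lseq d ψ φ (m+1)) = q := hA3
  rw [ratio, lt_div_iff₀ hb1] at hgt
  rw [ratio, div_eq_iff (ne_of_gt hb2)] at heq
  have key : q < ratio d ψ φ (Lseq d ψ φ (m+1)) l := by
    rw [ratio, lt_div_iff₀ hb3]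
    nlinarith [hgt, heq]
  calc q < ratio d ψ φ (Lseq d ψ φ (m+1)) l := key
    _ = Qseq d ψ φ (m+2) := hB3

lemma Qseq_mono {a b : ℕ} (ha : 1 ≤ a) (hab : a ≤ b) (hb : b ≤ kstop d ψ φ) :
    Qseq d ψ φ a ≤ Qseq d ψ φ b := by
  induction b with
  | zero => omega
  | succ b ih =>
    rcases Nat.lt_or_ge a (b+1) with h | h
    · have hb' : b ≤ kstop d ψ φ := by omega
      have h1 : Qseq d ψ φ a ≤ Qseq d ψ φ b := ih (by omega) hb'
      have hb1 : 1 ≤ b := by omega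
      obtain ⟨m, rfl⟩ : ∃ m, b = m + 1 := ⟨b - 1, by omega⟩
      have := Qseq_lt_succ hψpos hφpos m (by omega)
      linarith
    · have : a = b + 1 := by omega
      subst this
      exact le_refl _

lemma Qseq_pos {j : ℕ} (h1 : 1 ≤ j) (hj : j ≤ kstop d ψ φ) : 0 < Qseq d ψ φ j := by
  obtain ⟨m, rfl⟩ : ∃ m, j = m + 1 := ⟨j - 1, by omega⟩
  exact (step_at hψpos hφpos m (by omega)).2.2.2.2.2


lemma Jspec {i : ℕ} (h1 : 1 ≤ i) (hi : i ≤ d) :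
    1 ≤ sInf {j : ℕ | Lseq d ψ φ j ≤ i} ∧ sInf {j : ℕ | Lseq d ψ φ j ≤ i} ≤ kstop d ψ φ ∧
      Lseq d ψ φ (sInf {j : ℕ | Lseq d ψ φ j ≤ i}) ≤ i := by
  have hkmem : kstop d ψ φ ∈ {j : ℕ | Lseq d ψ φ j ≤ i} := by
    show Lseq d ψ φ (kstop d ψ φ) ≤ i
    rw [Lseq_kstop hψpos hφpos]; omega
  have hJmem : sInf {j : ℕ | Lseq d ψ φ j ≤ i} ∈ {j : ℕ | Lseq d ψ φ j ≤ i} :=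
    Nat.sInf_mem ⟨_, hkmem⟩
  have hJk : sInf {j : ℕ | Lseq d ψ φ j ≤ i} ≤ kstop d ψ φ := Nat.sInf_le hkmem
  refine ⟨?_, hJk, hJmem⟩
  by_contra h
  have h0 : sInf {j : ℕ | Lseq d ψ φ j ≤ i} = 0 := by omega
  rw [h0] at hJmem
  have : Lseq d ψ φ 0 = d + 1 := rfl
  have := hJmem
  simp only [Set.mem_setOf_eq] at this
  omega

lemma block_eq {j i : ℕ} (hj1 : 1 ≤ j) (hjk : j ≤ kstop d ψ φ)
    (h1 : Lseq d ψ φ j ≤ i) (h2 : i < Lseq d ψ φ (j-1)) :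
    sInf {j' : ℕ | Lseq d ψ φ j' ≤ i} = j := by
  have hle : sInf {j' : ℕ | Lseq d ψ φ j' ≤ i} ≤ j := Nat.sInf_le h1
  have hJmem : sInf {j' : ℕ | Lseq d ψ φ j' ≤ i} ∈ {j' : ℕ | Lseq d ψ φ j' ≤ i} :=
    Nat.sInf_mem ⟨j, h1⟩
  simp only [Set.mem_setOf_eq] at hJmem
  by_contra h
  have hlt : sInf {j' : ℕ | Lseq d ψ φ j' ≤ i} ≤ j - 1 := by omega
  have := Lseq_anti hψpos hφpos hlt (by omega)
  omega

lemma sum_phif (j : ℕ) (hj : j ≤ kstop d ψ φ) :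
    ∑ i ∈ Finset.Ico (Lseq d ψ φ j) (d+1), phif d ψ φ i = Cm d ψ (Lseq d ψ φ j) := by
  induction j with
  | zero =>
    have h0 : Lseq d ψ φ 0 = d + 1 := rfl
    rw [h0, Finset.Ico_self, Finset.sum_empty, Cm, Finset.Icc_eq_empty (by omega),
      Finset.sum_empty]
  | succ j ih =>
    obtain ⟨hA1, hA2, hA3, _, _, _⟩ := step_at hψpos hφpos j (by omega)
    obtain ⟨hLj1, hLj2, hLj3⟩ := Lseq_before hψpos hφpos j (by omega)
    have h2j : 2 ≤ Lseq d ψ φ j := hLj3 (by omega)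
    have hle1 : Lseq d ψ φ (j+1) ≤ Lseq d ψ φ j := by omega
    rw [← Finset.sum_Ico_consecutive (phif d ψ φ) hle1 hLj1, ih (by omega)]
    have hblock : ∀ i ∈ Finset.Ico (Lseq d ψ φ (j+1)) (Lseq d ψ φ j),
        phif d ψ φ i = Qseq d ψ φ (j+1) * φ i := by
      intro i hi
      rw [Finset.mem_Ico] at hi
      rw [phif, block_eq hψpos hφpos (by omega) (by omega) hi.1 (by simpa using hi.2)]
    rw [Finset.sum_congr rfl hblock, ← Finset.mul_sum,
      ← Cm_sub φ hle1 hLj1]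
    have hden : Cm d φ (Lseq d ψ φ (j+1)) - Cm d φ (Lseq d ψ φ j) ≠ 0 :=
      ne_of_gt (Cm_sub_pos φ hφpos hA1 (by omega) hLj1)
    rw [ratio, div_eq_iff hden] at hA3
    linarith [hA3]

end Aux

/-- The intermediate vector `φ^f` produced by the recursive construction
is a descending probability vector. -/
theorem phif_descProb (d : ℕ) (hd : 1 ≤ d) (ψ φ : ℕ → ℝ)
    (hψ : DescProb d ψ) (hφ : DescProb d φ)
    (hψpos : ∀ i, 1 ≤ i → i ≤ d → 0 < ψ i) (hφpos : ∀ i, 1 ≤ i → i ≤ d → 0 < φ i) :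
    DescProb d (phif d ψ φ) := by
  constructor
  · intro i h1 hi
    obtain ⟨hJ1, hJk, hJL⟩ := Jspec hψpos hφpos h1 hi
    exact mul_nonneg (Qseq_pos hψpos hφpos hJ1 hJk).le (hφ.nonneg i h1 hi)
  · intro i j h1 hij hj
    obtain ⟨hJ1, hJk, hJL⟩ := Jspec hψpos hφpos h1 (by omega)
    obtain ⟨hJ1', hJk', hJL'⟩ := Jspec hψpos hφpos (by omega : 1 ≤ j) hj
    have hJle : sInf {j' : ℕ | Lseq d ψ φ j' ≤ j} ≤ sInf {j' : ℕ | Lseq d ψ φ j' ≤ i} :=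
      Nat.sInf_le (show Lseq d ψ φ _ ≤ j by omega)
    have hQle : Qseq d ψ φ (sInf {j' : ℕ | Lseq d ψ φ j' ≤ j}) ≤
        Qseq d ψ φ (sInf {j' : ℕ | Lseq d ψ φ j' ≤ i}) :=
      Qseq_mono hψpos hφpos hJ1' hJle hJk
    have hφle : φ j ≤ φ i := hφ.anti i j h1 hij hj
    have hφj : 0 ≤ φ j := hφ.nonneg j (by omega) hj
    have hQpos : 0 ≤ Qseq d ψ φ (sInf {j' : ℕ | Lseq d ψ φ j' ≤ i}) :=
      (Qseq_pos hψpos hφpos hJ1 hJk).le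
    calc phif d ψ φ j = Qseq d ψ φ (sInf {j' : ℕ | Lseq d ψ φ j' ≤ j}) * φ j := rfl
      _ ≤ Qseq d ψ φ (sInf {j' : ℕ | Lseq d ψ φ j' ≤ i}) * φ j :=
        mul_le_mul_of_nonneg_right hQle hφj
      _ ≤ Qseq d ψ φ (sInf {j' : ℕ | Lseq d ψ φ j' ≤ i}) * φ i :=
        mul_le_mul_of_nonneg_left hφle hQpos
      _ = phif d ψ φ i := rfl
  · have := sum_phif hψpos hφpos (kstop d ψ φ) (le_refl _)
    rw [Lseq_kstop hψpos hφpos] at this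
    rw [← Finset.Ico_add_one_right_eq_Icc, this, Cm, hψ.sum_one]
end

section
/- Every least upper bound of ψ and φ in the majorization order is majorized by the intermediate vector: if w ∈ ℝ^d is a descending probability vector such that ψ ≺ w, φ ≺ w, and w ≺ u for every descending probability vector u with ψ ≺ u and φ ≺ u, then w ≺ φ^f. (In lattice terms, the optimal common product φ^∨ = ψ ∨ φ satisfies φ^∨ ≺ φ^f.) -/
open Finset

lemma Cm_top (d : ℕ) (p : ℕ → ℝ) : Cm d p (d+1) = 0 := by
  simp [Cm, Finset.Icc_eq_empty_of_lt (by omega : d < d + 1)]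

lemma Cm_eq_Ioc (d : ℕ) (p : ℕ → ℝ) (l : ℕ) (hl : 1 ≤ l) :
    Cm d p l = ∑ i ∈ Finset.Ioc (l-1) d, p i := by
  rw [Cm]
  apply Finset.sum_congr _ (fun _ _ => rfl)
  ext i; simp only [Finset.mem_Icc, Finset.mem_Ioc]; omega

lemma Cm_diff (d : ℕ) (p : ℕ → ℝ) (l m : ℕ) (hl : 1 ≤ l) (hlm : l ≤ m) (hm : m ≤ d+1) :
    Cm d p l - Cm d p m = ∑ i ∈ Finset.Ioc (l-1) (m-1), p i := by
  rw [Cm_eq_Ioc d p l hl, Cm_eq_Ioc d p m (by omega)]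
  have h := Finset.sum_Ioc_consecutive p (by omega : l-1 ≤ m-1) (by omega : m-1 ≤ d)
  linarith



section Aux
variable (d : ℕ) (ψ φ : ℕ → ℝ)

lemma Cm_one (p : ℕ → ℝ) (hp : DescProb d p) : Cm d p 1 = 1 := hp.sum_one

variable (hψ : DescProb d ψ) (hφ : DescProb d φ)
  (hψpos : ∀ i, 1 ≤ i → i ≤ d → 0 < ψ i) (hφpos : ∀ i, 1 ≤ i → i ≤ d → 0 < φ i)

include hφpos in
lemma Bdiff_pos (l m : ℕ) (hl : 1 ≤ l) (hlm : l < m) (hm : m ≤ d+1) :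
    0 < Cm d φ l - Cm d φ m := by
  rw [Cm_diff d φ l m hl (by omega) hm]
  apply Finset.sum_pos
  · intro i hi
    simp only [Finset.mem_Ioc] at hi
    exact hφpos i (by omega) (by omega)
  · exact Finset.nonempty_Ioc.2 (by omega)

lemma Cdiff_nonneg (p : ℕ → ℝ) (hp : DescProb d p) (l m : ℕ) (hl : 1 ≤ l) (hlm : l ≤ m)
    (hm : m ≤ d+1) : 0 ≤ Cm d p l - Cm d p m := by
  rw [Cm_diff d p l m hl hlm hm]
  apply Finset.sum_nonneg
  intro i hi
  simp only [Finset.mem_Ioc] at hi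
  exact hp.nonneg i (by omega) (by omega)

/-- The set of ratios is the image of a finite set. -/
lemma ratio_set_eq (prev : ℕ) :
    {x : ℝ | ∃ l, 1 ≤ l ∧ l ≤ prev - 1 ∧ x = ratio d ψ φ prev l} =
      (ratio d ψ φ prev) '' (Set.Icc 1 (prev-1)) := by
  ext x
  simp only [Set.mem_setOf_eq, Set.mem_image, Set.mem_Icc]
  constructor
  · rintro ⟨l, h1, h2, h3⟩; exact ⟨l, ⟨h1, h2⟩, h3.symm⟩
  · rintro ⟨l, ⟨h1, h2⟩, h3⟩; exact ⟨l, h1, h2, h3.symm⟩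

lemma ratio_set_finite (prev : ℕ) :
    {x : ℝ | ∃ l, 1 ≤ l ∧ l ≤ prev - 1 ∧ x = ratio d ψ φ prev l}.Finite := by
  rw [ratio_set_eq]
  exact (Set.finite_Icc _ _).image _

/-- `stepQ` is a lower bound for all the ratios. -/
lemma stepQ_le (prev l : ℕ) (h1 : 1 ≤ l) (h2 : l ≤ prev - 1) :
    stepQ d ψ φ prev ≤ ratio d ψ φ prev l := by
  apply csInf_le (ratio_set_finite d ψ φ prev).bddBelow
  exact ⟨l, h1, h2, rfl⟩

/-- `stepL` attains the minimum. -/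
lemma stepL_mem (prev : ℕ) (hprev : 2 ≤ prev) :
    1 ≤ stepL d ψ φ prev ∧ stepL d ψ φ prev ≤ prev - 1 ∧
      ratio d ψ φ prev (stepL d ψ φ prev) = stepQ d ψ φ prev := by
  have hne : {x : ℝ | ∃ l, 1 ≤ l ∧ l ≤ prev - 1 ∧ x = ratio d ψ φ prev l}.Nonempty :=
    ⟨ratio d ψ φ prev 1, 1, le_refl 1, by omega, rfl⟩
  have hmem := hne.csInf_mem (ratio_set_finite d ψ φ prev)
  obtain ⟨l0, hl1, hl2, hl3⟩ := hmem
  have : stepL d ψ φ prev ∈ {l : ℕ | 1 ≤ l ∧ l ≤ prev - 1 ∧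
      ratio d ψ φ prev l = stepQ d ψ φ prev} :=
    Nat.sInf_mem ⟨l0, hl1, hl2, hl3.symm⟩
  exact this

end Aux



set_option maxHeartbeats 2000000 in
lemma phif_facts (d : ℕ) (hd : 1 ≤ d) (ψ φ : ℕ → ℝ)
    (hψ : DescProb d ψ) (hφ : DescProb d φ)
    (hψpos : ∀ i, 1 ≤ i → i ≤ d → 0 < ψ i) (hφpos : ∀ i, 1 ≤ i → i ≤ d → 0 < φ i) :
    DescProb d (phif d ψ φ) ∧ MajorizedBy d ψ (phif d ψ φ) ∧
      MajorizedBy d φ (phif d ψ φ) := by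
  set L := Lseq d ψ φ with hLdef
  set Q := Qseq d ψ φ with hQdef
  set A := Cm d ψ with hAdef
  set B := Cm d φ with hBdef
  have hL0 : L 0 = d + 1 := rfl
  have hLs : ∀ j, L (j+1) = stepL d ψ φ (L j) := fun j => rfl
  have hQs : ∀ j, Q (j+1) = stepQ d ψ φ (L j) := fun j => rfl
  have hA1 : A 1 = 1 := hψ.sum_one
  have hB1 : B 1 = 1 := hφ.sum_one
  have hAtop : A (d+1) = 0 := Cm_top d ψ
  have hBtop : B (d+1) = 0 := Cm_top d φ
  -- step facts for any j with 2 ≤ L j ≤ d+1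
  have hstep : ∀ j, 2 ≤ L j → L j ≤ d + 1 →
      1 ≤ L (j+1) ∧ L (j+1) ≤ L j - 1 ∧ ratio d ψ φ (L j) (L (j+1)) = Q (j+1) := by
    intro j h2 _
    obtain ⟨a, b, c⟩ := stepL_mem d ψ φ (L j) h2
    exact ⟨a, b, c⟩
  -- while the recursion has not reached 1, L j stays in range and decreases
  have hrangeAux : ∀ j, (∀ m, m < j → L m ≠ 1) → 1 ≤ L j ∧ L j ≤ d + 1 - j := by
    intro j
    induction j with
    | zero => intro _; rw [hL0]; omega
    | succ n ih =>
      intro h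
      have hn := ih (fun m hm => h m (by omega))
      have hne : L n ≠ 1 := h n (by omega)
      have h2 : 2 ≤ L n := by omega
      obtain ⟨a, b, _⟩ := hstep n h2 (by omega)
      omega
  have hex : ∃ j, L j = 1 := by
    by_cases hc : ∀ m, m < d → L m ≠ 1
    · refine ⟨d, ?_⟩
      have := hrangeAux d hc
      omega
    · push_neg at hc
      obtain ⟨m, _, hm⟩ := hc
      exact ⟨m, hm⟩
  set k := kstop d ψ φ with hkdef
  have hk1 : L k = 1 := Nat.sInf_mem hex
  have hkmin : ∀ j, j < k → L j ≠ 1 := by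
    intro j hj h
    have : kstop d ψ φ ≤ j := Nat.sInf_le (show j ∈ {j : ℕ | Lseq d ψ φ j = 1} from h)
    omega
  have hrange : ∀ j, j ≤ k → 1 ≤ L j ∧ L j ≤ d + 1 - j := by
    intro j hj
    exact hrangeAux j (fun m hm => hkmin m (by omega))
  have h2le : ∀ j, j < k → 2 ≤ L j := by
    intro j hj
    have e1 := hrange j (le_of_lt hj)
    have e2 := hkmin j hj
    omega
  have hsf : ∀ j, j < k →
      1 ≤ L (j+1) ∧ L (j+1) ≤ L j - 1 ∧ ratio d ψ φ (L j) (L (j+1)) = Q (j+1) := by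
    intro j hj
    exact hstep j (h2le j hj) ((hrange j (le_of_lt hj)).2.trans (by omega))
  have hLub : ∀ j, j ≤ k → L j ≤ d + 1 := fun j hj => by have := hrange j hj; omega
  have hLlt : ∀ j, j < k → L (j+1) < L j := by
    intro j hj
    have := hsf j hj
    have := h2le j hj
    omega
  have hLmono : ∀ j, j ≤ k → ∀ m, m ≤ j → L j ≤ L m := by
    intro j
    induction j with
    | zero =>
      intro _ m hm
      obtain rfl : m = 0 := Nat.le_zero.mp hm
      exact le_refl _
    | succ n ih =>
      intro hj m hm
      rcases Nat.eq_or_lt_of_le hm with h | h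
      · rw [h]
      · have h1 := hLlt n (by omega)
        have h2 := ih (by omega) m (by omega)
        omega
  have hQle : ∀ j, j < k → ∀ l, 1 ≤ l → l ≤ L j - 1 → Q (j+1) ≤ ratio d ψ φ (L j) l :=
    fun j hj l h1 h2 => stepQ_le d ψ φ (L j) l h1 h2
  -- Q (j+1) * (B (L (j+1)) - B (L j)) = A (L (j+1)) - A (L j)
  have hQmul : ∀ j, j < k →
      Q (j+1) * (B (L (j+1)) - B (L j)) = A (L (j+1)) - A (L j) := by
    intro j hj
    obtain ⟨h1, h2, h3⟩ := hsf j hj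
    have hden : 0 < B (L (j+1)) - B (L j) :=
      Bdiff_pos d φ hφpos _ _ h1 (by have := h2le j hj; omega) (hLub j (le_of_lt hj))
    rw [← h3, ratio]
    field_simp
    exact mul_div_cancel_right₀ _ hden.ne'
  have hQnn : ∀ j, 1 ≤ j → j ≤ k → 0 ≤ Q j := by
    intro j h1 h2
    obtain ⟨ha, hb, hc⟩ := hsf (j-1) (by omega)
    have hj : j - 1 + 1 = j := by omega
    rw [hj] at ha hb hc
    have hden : 0 < B (L j) - B (L (j-1)) :=
      Bdiff_pos d φ hφpos _ _ ha (by have := h2le (j-1) (by omega); omega)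
        (hLub (j-1) (by omega))
    have hnum : 0 ≤ A (L j) - A (L (j-1)) :=
      Cdiff_nonneg d ψ hψ _ _ ha (by have := h2le (j-1) (by omega); omega)
        (hLub (j-1) (by omega))
    rw [← hc, ratio]
    exact div_nonneg hnum hden.le
  -- monotonicity of Q
  have hQmonoStep : ∀ j, 1 ≤ j → j < k → Q j ≤ Q (j+1) := by
    intro j h1 hj
    obtain ⟨ha, hb, hc⟩ := hsf (j-1) (by omega)
    have hjj : j - 1 + 1 = j := by omega
    rw [hjj] at ha hb hc
    obtain ⟨ha', hb', hc'⟩ := hsf j hj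
    have hprev2 : L (j-1) ≤ d + 1 := hLub (j-1) (by omega)
    have h2p2 : 2 ≤ L (j-1) := h2le (j-1) (by omega)
    have h2p : 2 ≤ L j := h2le j hj
    have hy1 : 0 < B (L j) - B (L (j-1)) := Bdiff_pos d φ hφpos _ _ ha (by omega) hprev2
    have hy : 0 < B (L (j+1)) - B (L (j-1)) := Bdiff_pos d φ hφpos _ _ ha' (by omega) hprev2
    have hy2 : 0 < B (L (j+1)) - B (L j) := Bdiff_pos d φ hφpos _ _ ha' (by omega) (by omega)
    -- x1 = Q j * y1
    have hx1 : A (L j) - A (L (j-1)) = Q j * (B (L j) - B (L (j-1))) := by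
      have := hQmul (j-1) (by omega); rw [hjj] at this; linarith
    -- Q j ≤ x / y
    have hxy : Q j ≤ ratio d ψ φ (L (j-1)) (L (j+1)) := by
      have := hQle (j-1) (by omega) (L (j+1)) ha' (by omega)
      rwa [hjj] at this
    rw [ratio] at hxy
    have hx : Q j * (B (L (j+1)) - B (L (j-1))) ≤ A (L (j+1)) - A (L (j-1)) :=
      (le_div_iff₀ hy).mp hxy
    -- conclude
    rw [← hc', ratio, le_div_iff₀ hy2]
    nlinarith
  have hQmono : ∀ m j, 1 ≤ m → m ≤ j → j ≤ k → Q m ≤ Q j := by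
    intro m j h1 h2 h3
    induction j with
    | zero => omega
    | succ n ih =>
      rcases Nat.eq_or_lt_of_le h2 with h | h
      · rw [h]
      · calc Q m ≤ Q n := ih (by omega) (by omega)
          _ ≤ Q (n+1) := hQmonoStep n (by omega) (by omega)
  -- block index
  have hJfacts : ∀ i, 1 ≤ i → i ≤ d →
      1 ≤ sInf {j : ℕ | L j ≤ i} ∧ sInf {j : ℕ | L j ≤ i} ≤ k ∧
        L (sInf {j : ℕ | L j ≤ i}) ≤ i ∧ i < L (sInf {j : ℕ | L j ≤ i} - 1) := by
    intro i hi1 hi2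
    have hne : (sInf {j : ℕ | L j ≤ i}) ∈ {j : ℕ | L j ≤ i} :=
      Nat.sInf_mem ⟨k, by simp only [Set.mem_setOf_eq]; omega⟩
    have hle : sInf {j : ℕ | L j ≤ i} ≤ k := Nat.sInf_le (by simp only [Set.mem_setOf_eq]; omega)
    have hpos : 1 ≤ sInf {j : ℕ | L j ≤ i} := by
      by_contra h
      have h0 : sInf {j : ℕ | L j ≤ i} = 0 := by omega
      rw [h0] at hne
      simp only [Set.mem_setOf_eq, hL0] at hne
      omega
    have hgt : i < L (sInf {j : ℕ | L j ≤ i} - 1) := by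
      have := Nat.notMem_of_lt_sInf (show sInf {j : ℕ | L j ≤ i} - 1 < sInf {j : ℕ | L j ≤ i} by omega)
      simp only [Set.mem_setOf_eq] at this
      omega
    exact ⟨hpos, hle, hne, hgt⟩
  have hblock : ∀ j i, 1 ≤ j → j ≤ k → L j ≤ i → i < L (j-1) → sInf {j' : ℕ | L j' ≤ i} = j := by
    intro j i h1 h2 h3 h4
    have hmem : j ∈ {j' : ℕ | L j' ≤ i} := h3
    have hle : sInf {j' : ℕ | L j' ≤ i} ≤ j := Nat.sInf_le hmem
    have hmem2 : sInf {j' : ℕ | L j' ≤ i} ∈ {j' : ℕ | L j' ≤ i} := Nat.sInf_mem ⟨j, hmem⟩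
    by_contra hne
    have hlt : sInf {j' : ℕ | L j' ≤ i} ≤ j - 1 := by omega
    have := hLmono (j-1) (by omega) _ hlt
    simp only [Set.mem_setOf_eq] at hmem2
    omega
  have hphifeq : ∀ i, phif d ψ φ i = Q (sInf {j : ℕ | L j ≤ i}) * φ i := fun i => rfl
  -- block constancy
  have hblockval : ∀ j i, 1 ≤ j → j ≤ k → L j ≤ i → i < L (j-1) →
      phif d ψ φ i = Q j * φ i := by
    intro j i h1 h2 h3 h4
    rw [hphifeq, hblock j i h1 h2 h3 h4]
  set F := Cm d (phif d ψ φ) with hFdef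
  -- within-block tail sum formula
  have hFblock : ∀ j, j < k → ∀ l, L (j+1) ≤ l → l ≤ L j →
      F l - F (L j) = Q (j+1) * (B l - B (L j)) := by
    intro j hj l h1 h2
    obtain ⟨ha, hb, hc⟩ := hsf j hj
    have hl1 : 1 ≤ l := by omega
    have hLjd : L j ≤ d + 1 := hLub j (le_of_lt hj)
    rw [hFdef, Cm_diff d _ l (L j) hl1 h2 hLjd, hBdef, Cm_diff d φ l (L j) hl1 h2 hLjd,
      Finset.mul_sum]
    apply Finset.sum_congr rfl
    intro i hi
    simp only [Finset.mem_Ioc] at hi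
    apply hblockval (j+1) i (by omega) (by omega) (by omega)
    simp only [Nat.add_sub_cancel]
    omega
  -- tail sums agree at block boundaries
  have hFA : ∀ j, j ≤ k → F (L j) = A (L j) := by
    intro j
    induction j with
    | zero =>
      intro _
      rw [hL0, hAdef, Cm_top, hFdef, Cm_top]
    | succ n ih =>
      intro hj
      obtain ⟨ha, hb, hc⟩ := hsf n (by omega)
      have h1 := hFblock n (by omega) (L (n+1)) (le_refl _) (by have := hLlt n (by omega); omega)
      have h2 := hQmul n (by omega)
      have h3 := ih (by omega)
      linarith
  -- the invariant A (L j) ≤ B (L j)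
  have hInv : ∀ j, j ≤ k → A (L j) ≤ B (L j) := by
    intro j
    induction j with
    | zero =>
      intro _
      rw [hL0, hAtop, hBtop]
    | succ n ih =>
      intro hj
      have hnk : n < k := by omega
      obtain ⟨ha, hb, hc⟩ := hsf n hnk
      have h2p : 2 ≤ L n := h2le n hnk
      have hLnd : L n ≤ d + 1 := hLub n (le_of_lt hnk)
      have hqm := hQmul n hnk
      have hΔ : 0 < B (L (n+1)) - B (L n) := Bdiff_pos d φ hφpos _ _ ha (by omega) hLnd
      rcases le_total (Q (n+1)) 1 with hq | hq
      · have := ih (by omega)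
        nlinarith
      · -- mediant argument
        have hq1 := hQle n hnk 1 (le_refl 1) (by omega)
        rw [show ratio d ψ φ (L n) 1 = (A 1 - A (L n)) / (B 1 - B (L n)) from rfl] at hq1
        have hden1 : 0 < B 1 - B (L n) := Bdiff_pos d φ hφpos 1 (L n) (le_refl 1) (by omega) hLnd
        have hmed : Q (n+1) * (B 1 - B (L n)) ≤ A 1 - A (L n) := (le_div_iff₀ hden1).mp hq1
        rw [hA1, hB1] at hmed
        have hBl : B (L (n+1)) ≤ 1 := by
          have := Cdiff_nonneg d φ hφ 1 (L (n+1)) (le_refl 1) ha (by omega)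
          rw [← hBdef, hB1] at this; linarith
        nlinarith
  -- main pointwise tail bounds
  have hFle : ∀ l, 1 ≤ l → l ≤ d → F l ≤ A l ∧ F l ≤ B l := by
    intro l hl1 hl2
    obtain ⟨hj1, hj2, hj3, hj4⟩ := hJfacts l hl1 hl2
    set j := sInf {j' : ℕ | L j' ≤ l} with hjdef
    have hjj : j - 1 + 1 = j := by omega
    have hjk : j - 1 < k := by omega
    have hFb := hFblock (j-1) hjk l (by rw [hjj]; exact hj3) (by omega)
    rw [hjj] at hFb
    have hFAp := hFA (j-1) (by omega)
    have hFl : F l = A (L (j-1)) + Q j * (B l - B (L (j-1))) := by linarith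
    have h2p : 2 ≤ L (j-1) := h2le (j-1) hjk
    have hLpd : L (j-1) ≤ d + 1 := hLub (j-1) (by omega)
    have hΔ : 0 < B l - B (L (j-1)) := Bdiff_pos d φ hφpos l _ hl1 (by omega) hLpd
    constructor
    · have hql := hQle (j-1) hjk l hl1 (by omega)
      rw [hjj, show ratio d ψ φ (L (j-1)) l = (A l - A (L (j-1))) / (B l - B (L (j-1))) from rfl]
        at hql
      have := (le_div_iff₀ hΔ).mp hql
      linarith
    · rcases le_total (Q j) 1 with hq | hq
      · have hinv := hInv (j-1) (by omega)
        nlinarith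
      · -- q ≥ 1 case : compare with the block boundary L j
        obtain ⟨ha, hb, hc⟩ := hsf (j-1) hjk
        rw [hjj] at ha hb hc
        have hqm := hQmul (j-1) hjk
        rw [hjj] at hqm
        have hinv := hInv j hj2
        have hBmon : 0 ≤ B (L j) - B l :=
          Cdiff_nonneg d φ hφ (L j) l ha hj3 (by omega)
        have hAlj : A (L j) = A (L (j-1)) + Q j * (B (L j) - B (L (j-1))) := by linarith
        nlinarith
  -- Q at block index of i is nonnegative, entries nonneg and descending
  have hphinn : ∀ i, 1 ≤ i → i ≤ d → 0 ≤ phif d ψ φ i := by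
    intro i h1 h2
    obtain ⟨a, b, c, e⟩ := hJfacts i h1 h2
    rw [hphifeq]
    exact mul_nonneg (hQnn _ a b) (hφ.nonneg i h1 h2)
  have hphianti : ∀ i i', 1 ≤ i → i ≤ i' → i' ≤ d → phif d ψ φ i' ≤ phif d ψ φ i := by
    intro i i' h1 h2 h3
    obtain ⟨a, b, c, e⟩ := hJfacts i h1 (by omega)
    obtain ⟨a', b', c', e'⟩ := hJfacts i' (by omega) h3
    have hsub : sInf {j : ℕ | L j ≤ i'} ≤ sInf {j : ℕ | L j ≤ i} :=
      Nat.sInf_le (by simp only [Set.mem_setOf_eq]; omega)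
    rw [hphifeq, hphifeq]
    calc Q (sInf {j : ℕ | L j ≤ i'}) * φ i'
        ≤ Q (sInf {j : ℕ | L j ≤ i'}) * φ i :=
          mul_le_mul_of_nonneg_left (hφ.anti i i' h1 h2 h3) (hQnn _ a' b')
      _ ≤ Q (sInf {j : ℕ | L j ≤ i}) * φ i :=
          mul_le_mul_of_nonneg_right (hQmono _ _ a' hsub b) ((hφ.nonneg i h1 (by omega)))
  have hFsum : F 1 = 1 := by
    have := hFA k (le_refl k)
    rw [hk1] at this
    rw [this, hA1]
  have hDesc : DescProb d (phif d ψ φ) := ⟨hphinn, hphianti, hFsum⟩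
  -- head sums from tail sums
  have hhead : ∀ p : ℕ → ℝ, ∀ m, 1 ≤ m → m ≤ d →
      ∑ i ∈ Finset.Icc 1 m, p i = Cm d p 1 - Cm d p (m+1) := by
    intro p m h1 h2
    rw [Cm_diff d p 1 (m+1) (le_refl 1) (by omega) (by omega)]
    apply Finset.sum_congr _ (fun _ _ => rfl)
    ext i; simp only [Finset.mem_Icc, Finset.mem_Ioc]; omega
  have hmaj : ∀ p : ℕ → ℝ, Cm d p 1 = 1 → (∀ l, 2 ≤ l → l ≤ d → F l ≤ Cm d p l) →
      MajorizedBy d p (phif d ψ φ) := by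
    intro p hp1 hp2
    constructor
    · intro m h1 h2
      rw [hhead p m h1 h2, hhead (phif d ψ φ) m h1 h2, hp1, ← hFdef, hFsum]
      rcases Nat.eq_or_lt_of_le h2 with h | h
      · have e1 : Cm d p (m+1) = 0 := by rw [h]; exact Cm_top d p
        have e2 : F (m+1) = 0 := by rw [hFdef, h]; exact Cm_top d _
        rw [e1, e2]
      · exact sub_le_sub_left (hp2 (m+1) (by omega) (by omega)) 1
    · have e1 : ∑ i ∈ Finset.Icc 1 d, p i = Cm d p 1 := rfl
      have e2 : ∑ i ∈ Finset.Icc 1 d, phif d ψ φ i = F 1 := rfl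
      rw [e1, e2, hp1, hFsum]
  refine ⟨hDesc, hmaj ψ hA1 (fun l a b => (hFle l (by omega) b).1),
    hmaj φ hB1 (fun l a b => (hFle l (by omega) b).2)⟩

/-- Every least upper bound `w` of `ψ` and `φ` in the majorization order
(the optimal common product `φ^∨ = ψ ∨ φ`) is majorized by the intermediate vector:
`w ≺ φ^f`. -/
theorem join_majorized_by_phif (d : ℕ) (hd : 1 ≤ d) (ψ φ : ℕ → ℝ)
    (hψ : DescProb d ψ) (hφ : DescProb d φ)
    (hψpos : ∀ i, 1 ≤ i → i ≤ d → 0 < ψ i) (hφpos : ∀ i, 1 ≤ i → i ≤ d → 0 < φ i)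
    (w : ℕ → ℝ) (hw : DescProb d w)
    (hψw : MajorizedBy d ψ w) (hφw : MajorizedBy d φ w)
    (hlub : ∀ u : ℕ → ℝ, DescProb d u → MajorizedBy d ψ u → MajorizedBy d φ u →
      MajorizedBy d w u) :
    MajorizedBy d w (phif d ψ φ) := by
  obtain ⟨h1, h2, h3⟩ := phif_facts d hd ψ φ hψ hφ hψpos hφpos
  exact hlub (phif d ψ φ) h1 h2 h3
end

section
/- Let u^1, …, u^m ∈ ℝ^d be descending probability vectors and let g = u^1 ∧ ⋯ ∧ u^m be their meet. Then g is itself a descending probability vector (g_1 ≥ g_2 ≥ ⋯ ≥ g_d ≥ 0 and ∑_i g_i = 1); g ≺ u^ι for every ι; and for every descending probability vector h with h ≺ u^ι for all ι, one has h ≺ g. Hence g is the greatest lower bound of {u^1,…,u^m} in the majorization order. -/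
open Finset

/-- The meet `u^1 ∧ ⋯ ∧ u^m` of a family of descending probability vectors in the
majorization lattice, defined componentwise via prefix sums (empty sums are `0`). -/
noncomputable def meetFam (m : ℕ) (u : Fin m → ℕ → ℝ) (i : ℕ) : ℝ :=
  (⨅ ι, ∑ j ∈ Finset.Icc 1 i, u ι j) - ⨅ ι, ∑ j ∈ Finset.Icc 1 (i - 1), u ι j

/-- The meet `g = u^1 ∧ ⋯ ∧ u^m` of descending probability vectors is
itself a descending probability vector, `g ≺ u^ι` for every `ι`, and any descending
probability vector `h` with `h ≺ u^ι` for all `ι` satisfies `h ≺ g`; hence `g` is the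
greatest lower bound of the family in the majorization order. -/
theorem meet_is_glb (d m : ℕ) (hd : 1 ≤ d) (hm : 1 ≤ m) (u : Fin m → ℕ → ℝ)
    (hu : ∀ ι, DescProb d (u ι)) :
    DescProb d (meetFam m u) ∧ (∀ ι, MajorizedBy d (meetFam m u) (u ι)) ∧
      ∀ h : ℕ → ℝ, DescProb d h → (∀ ι, MajorizedBy d h (u ι)) →
        MajorizedBy d h (meetFam m u) := by
  have hne : Nonempty (Fin m) := ⟨⟨0, hm⟩⟩
  set S : Fin m → ℕ → ℝ := fun ι k => ∑ j ∈ Finset.Icc 1 k, u ι j with hS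
  set F : ℕ → ℝ := fun k => ⨅ ι, S ι k with hF
  have hbdd : ∀ k, BddBelow (Set.range fun ι => S ι k) :=
    fun k => (Set.finite_range _).bddBelow
  have hmeet : ∀ i, meetFam m u i = F i - F (i - 1) := fun i => rfl
  have hF0 : F 0 = 0 := by
    simp only [hF, hS, Finset.Icc_self, Finset.Icc_eq_empty_of_lt (Nat.lt_one_iff.mpr rfl)]
    simp
  have hFd : F d = 1 := by
    simp only [hF, hS]
    rw [show (fun ι => ∑ j ∈ Finset.Icc 1 d, u ι j) = fun _ : Fin m => (1:ℝ) from
      funext fun ι => (hu ι).sum_one]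
    exact ciInf_const
  have hSmono : ∀ ι k l, k ≤ l → l ≤ d → S ι k ≤ S ι l := by
    intro ι k l hkl hld
    apply Finset.sum_le_sum_of_subset_of_nonneg (Finset.Icc_subset_Icc_right hkl)
    intro i hi _
    have := Finset.mem_Icc.mp hi
    exact (hu ι).nonneg i this.1 (this.2.trans hld)
  have hFmono : ∀ k l, k ≤ l → l ≤ d → F k ≤ F l := fun k l hkl hld =>
    le_ciInf fun ι => (ciInf_le (hbdd k) ι).trans (hSmono ι k l hkl hld)
  have hStop : ∀ ι n, S ι (n + 1) = S ι n + u ι (n + 1) := by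
    intro ι n
    simp only [hS]
    rw [Finset.sum_Icc_succ_top (Nat.one_le_iff_ne_zero.mpr (Nat.succ_ne_zero n))]
  have htel : ∀ k, ∑ i ∈ Finset.Icc 1 k, meetFam m u i = F k := by
    intro k
    induction k with
    | zero => simp [hF0]
    | succ n ih =>
      rw [Finset.sum_Icc_succ_top (Nat.one_le_iff_ne_zero.mpr (Nat.succ_ne_zero n)), ih,
        hmeet (n + 1), Nat.succ_sub_one]
      ring
  have hadj : ∀ i, 1 ≤ i → i + 1 ≤ d → meetFam m u (i + 1) ≤ meetFam m u i := by
    intro i hi1 hid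
    obtain ⟨ι, hι⟩ := exists_eq_ciInf_of_finite (f := fun ι => S ι i)
    have h1 : F (i - 1) ≤ S ι (i - 1) := ciInf_le (hbdd _) ι
    have h2 : F (i + 1) ≤ S ι (i + 1) := ciInf_le (hbdd _) ι
    have hFi : F i = S ι i := hι.symm
    have e1 : S ι i = S ι (i - 1) + u ι i := by
      have := hStop ι (i - 1)
      rwa [Nat.sub_add_cancel hi1] at this
    have e2 : S ι (i + 1) = S ι i + u ι (i + 1) := hStop ι i
    have hu' : u ι (i + 1) ≤ u ι i := (hu ι).anti i (i + 1) hi1 (Nat.le_succ i) hid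
    rw [hmeet, hmeet, Nat.succ_sub_one]
    linarith
  have hnonneg : ∀ i, 1 ≤ i → i ≤ d → 0 ≤ meetFam m u i := by
    intro i hi1 hid
    rw [hmeet]
    have := hFmono (i - 1) i (Nat.sub_le i 1) hid
    linarith
  have hanti : ∀ i j, 1 ≤ i → i ≤ j → j ≤ d → meetFam m u j ≤ meetFam m u i := by
    intro i j hi1 hij
    induction j, hij using Nat.le_induction with
    | base => exact fun _ => le_refl _
    | succ n hn ih =>
      exact fun hjd => (hadj n (hi1.trans hn) hjd).trans (ih (Nat.le_of_succ_le hjd))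
  have hsum : ∑ i ∈ Finset.Icc 1 d, meetFam m u i = 1 := by rw [htel d, hFd]
  refine ⟨⟨hnonneg, hanti, hsum⟩, fun ι => ⟨fun k hk1 hkd => ?_, ?_⟩,
    fun h hh hmaj => ⟨fun k hk1 hkd => ?_, ?_⟩⟩
  · rw [htel k]; exact ciInf_le (hbdd k) ι
  · rw [hsum, (hu ι).sum_one]
  · rw [htel k]
    exact le_ciInf fun ι => (hmaj ι).1 k hk1 hkd
  · rw [hh.sum_one, hsum]
end

section
/- Let ψ, φ ∈ ℝ^d be descending probability vectors. Among all descending probability vectors v with v ≺ φ (i.e., all vectors that can be deterministically transformed into φ), the meet ψ∧φ is the closest to ψ in the lattice distance: D(ψ, v) ≥ D(ψ, ψ∧φ) for every descending probability vector v with v ≺ φ. -/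
open Finset

/-- The meet `p ∧ q` of two descending probability vectors in the majorization lattice,
defined componentwise via prefix sums (empty sums are `0`). -/
noncomputable def meet2 (p q : ℕ → ℝ) (i : ℕ) : ℝ :=
  min (∑ j ∈ Finset.Icc 1 i, p j) (∑ j ∈ Finset.Icc 1 i, q j) -
    min (∑ j ∈ Finset.Icc 1 (i - 1), p j) (∑ j ∈ Finset.Icc 1 (i - 1), q j)

/-- The Gini index `G(p) = (d+1)/d - (2/d) ∑_{i=1}^d i p_i`. -/
noncomputable def gini (d : ℕ) (p : ℕ → ℝ) : ℝ :=
  (d + 1) / d - 2 / d * ∑ i ∈ Finset.Icc 1 d, (i : ℝ) * p i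

/-- The lattice distance `D(p, q) = G(p) + G(q) - 2 G(p ∧ q)`. -/
noncomputable def latDist (d : ℕ) (p q : ℕ → ℝ) : ℝ :=
  gini d p + gini d q - 2 * gini d (meet2 p q)

lemma prefix_meet (p q : ℕ → ℝ) : ∀ k,
    ∑ j ∈ Finset.Icc 1 k, meet2 p q j
      = min (∑ j ∈ Finset.Icc 1 k, p j) (∑ j ∈ Finset.Icc 1 k, q j) := by
  intro k
  induction k with
  | zero => simp
  | succ n ih =>
      rw [Finset.sum_Icc_succ_top (Nat.le_add_left 1 n), ih, meet2]
      simp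

lemma abel_sum (p : ℕ → ℝ) : ∀ d : ℕ,
    ∑ i ∈ Finset.Icc 1 d, (i : ℝ) * p i
      = (d + 1) * (∑ i ∈ Finset.Icc 1 d, p i)
        - ∑ k ∈ Finset.Icc 1 d, ∑ j ∈ Finset.Icc 1 k, p j := by
  intro d
  induction d with
  | zero => simp
  | succ n ih =>
      rw [Finset.sum_Icc_succ_top (Nat.le_add_left 1 n),
          Finset.sum_Icc_succ_top (Nat.le_add_left 1 n),
          Finset.sum_Icc_succ_top (Nat.le_add_left 1 n),
          Finset.sum_Icc_succ_top (Nat.le_add_left 1 n), ih]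
      push_cast
      ring

lemma meet_idem (p q : ℕ → ℝ) : meet2 p (meet2 p q) = meet2 p q := by
  funext i
  conv_lhs => rw [meet2, prefix_meet p q, prefix_meet p q]
  rw [meet2, ← min_assoc, min_self, ← min_assoc, min_self]

lemma T_meet (p q : ℕ → ℝ) (d : ℕ) :
    ∑ i ∈ Finset.Icc 1 d, (i : ℝ) * meet2 p q i
      = (d + 1) * min (∑ j ∈ Finset.Icc 1 d, p j) (∑ j ∈ Finset.Icc 1 d, q j)
        - ∑ k ∈ Finset.Icc 1 d, min (∑ j ∈ Finset.Icc 1 k, p j) (∑ j ∈ Finset.Icc 1 k, q j) := by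
  rw [abel_sum]
  simp only [prefix_meet]

/-- Among all descending probability vectors `v` with `v ≺ φ`, the meet
`ψ ∧ φ` is closest to `ψ` in the lattice distance: `D(ψ, v) ≥ D(ψ, ψ ∧ φ)`. -/
theorem meet_closest (d : ℕ) (hd : 1 ≤ d) (ψ φ v : ℕ → ℝ)
    (hψ : DescProb d ψ) (hφ : DescProb d φ) (hv : DescProb d v)
    (hvφ : MajorizedBy d v φ) :
    latDist d ψ (meet2 ψ φ) ≤ latDist d ψ v := by
  have hd0 : (0 : ℝ) < d := by exact_mod_cast hd
  have hkey : 2 * (∑ k ∈ Finset.Icc 1 d,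
        min (∑ j ∈ Finset.Icc 1 k, ψ j) (∑ j ∈ Finset.Icc 1 k, v j))
      ≤ (∑ k ∈ Finset.Icc 1 d, ∑ j ∈ Finset.Icc 1 k, v j)
        + ∑ k ∈ Finset.Icc 1 d,
            min (∑ j ∈ Finset.Icc 1 k, ψ j) (∑ j ∈ Finset.Icc 1 k, φ j) := by
    rw [Finset.mul_sum, ← Finset.sum_add_distrib]
    refine Finset.sum_le_sum fun k hk => ?_
    simp only [Finset.mem_Icc] at hk
    have hvf := hvφ.1 k hk.1 hk.2
    have h1 : min (∑ j ∈ Finset.Icc 1 k, ψ j) (∑ j ∈ Finset.Icc 1 k, v j)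
        ≤ ∑ j ∈ Finset.Icc 1 k, v j := min_le_right _ _
    have h2 : min (∑ j ∈ Finset.Icc 1 k, ψ j) (∑ j ∈ Finset.Icc 1 k, v j)
        ≤ min (∑ j ∈ Finset.Icc 1 k, ψ j) (∑ j ∈ Finset.Icc 1 k, φ j) :=
      min_le_min le_rfl hvf
    linarith
  have hmul := mul_le_mul_of_nonneg_left hkey (by positivity : (0:ℝ) ≤ 2 / d)
  unfold latDist
  rw [meet_idem]
  unfold gini
  rw [T_meet, T_meet, abel_sum v d, hψ.sum_one, hφ.sum_one, hv.sum_one, min_self]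
  nlinarith [hmul]
end

section
/- Meet is monotone in the majorization order: if ψ, v, φ ∈ ℝ^d are descending probability vectors with v ≺ φ, then ψ∧v ≺ ψ∧φ (majorization of the componentwise-defined meets). -/
open Finset

lemma meet2_prefix (p q : ℕ → ℝ) (k : ℕ) :
    ∑ i ∈ Finset.Icc 1 k, meet2 p q i =
      min (∑ j ∈ Finset.Icc 1 k, p j) (∑ j ∈ Finset.Icc 1 k, q j) := by
  set f : ℕ → ℝ := fun i => min (∑ j ∈ Finset.Icc 1 i, p j) (∑ j ∈ Finset.Icc 1 i, q j)
  have h0 : f 0 = 0 := by simp [f]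
  have : ∑ i ∈ Finset.Icc 1 k, meet2 p q i = ∑ i ∈ Finset.range k, (f (i + 1) - f i) := by
    rw [← Finset.Ico_add_one_right_eq_Icc, Finset.sum_Ico_eq_sum_range]
    simp [meet2, f, add_comm]
  rw [this, Finset.sum_range_sub, h0, sub_zero]

/-- The meet is monotone in the majorization order: if `v ≺ φ` then
`ψ ∧ v ≺ ψ ∧ φ`. -/
theorem meet_monotone (d : ℕ) (hd : 1 ≤ d) (ψ v φ : ℕ → ℝ)
    (hψ : DescProb d ψ) (hv : DescProb d v) (hφ : DescProb d φ)
    (hvφ : MajorizedBy d v φ) :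
    MajorizedBy d (meet2 ψ v) (meet2 ψ φ) := by
  obtain ⟨h1, h2⟩ := hvφ
  constructor
  · intro k hk hkd
    rw [meet2_prefix, meet2_prefix]
    exact min_le_min le_rfl (h1 k hk hkd)
  · rw [meet2_prefix, meet2_prefix, h2]
end
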